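/- Let B = ⊕_{(i,j)∈Ω} _iH_j, viewed as an S-S-bimodule. Then there is a short exact sequence of H-H-bimodules 0 → H ⊗_S B ⊗_S H →^δ H ⊗_S H →^mult H → 0, where δ(h ⊗ b ⊗ h') = hb ⊗ h' − h ⊗ bh' and mult is the multiplication map. -/

import Mathlib

set_option maxHeartbeats 1000000
set_option synthInstance.maxHeartbeats 400000

namespace GLS

/-- A symmetrizable (generalized) Cartan matrix together with a symmetrizer. -/
structure CartanPair (n : ℕ) where
  c : Fin n → Fin n → ℤ
  d : Fin n → ℤ
  hdiag : ∀ i, c i i = 2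
  hoff : ∀ i j, i ≠ j → c i j ≤ 0
  hdpos : ∀ i, 0 < d i
  hsym : ∀ i j, d i * c i j = d j * c j i

variable {n : ℕ}

/-- `g_{ij} = gcd(c_{ij}, c_{ji})` (number of arrows between `i ≠ j`). -/
def gij (A : CartanPair n) (i j : Fin n) : ℕ := if i = j then 0 else (A.c i j).gcd (A.c j i)

/-- the exponent `-c_{ji}/g_{ij}` appearing in the defining relations. -/
def expo (A : CartanPair n) (i j : Fin n) : ℕ := ((-(A.c j i)) / (gij A i j : ℤ)).toNat

/-- An orientation of the Cartan matrix. -/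
def IsOrientation (A : CartanPair n) (Ω : Finset (Fin n × Fin n)) : Prop :=
  (∀ i j : Fin n, ((i,j) ∈ Ω ∨ (j,i) ∈ Ω) ↔ A.c i j < 0) ∧
  (∀ i j : Fin n, (i,j) ∈ Ω → (j,i) ∉ Ω) ∧
  (∀ (f : ℕ → Fin n) (k : ℕ), 0 < k → (∀ m < k, (f m, f (m+1)) ∈ Ω) → f 0 ≠ f k)

/-- `k` is a sink of `Q°(C,Ω)` (no arrows start at `k`; arrows go `j → i` for `(i,j) ∈ Ω`). -/
def IsSink (Ω : Finset (Fin n × Fin n)) (k : Fin n) : Prop := ∀ i, (i, k) ∉ Ω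

/-- `k` is a source of `Q°(C,Ω)`. -/
def IsSource (Ω : Finset (Fin n × Fin n)) (k : Fin n) : Prop := ∀ j, (k, j) ∉ Ω

/-- `s_k(Ω)`: reverse all pairs incident with `k`. -/
def flipAt (k : Fin n) (Ω : Finset (Fin n × Fin n)) : Finset (Fin n × Fin n) :=
  (Ω.filter (fun p => p.1 ≠ k ∧ p.2 ≠ k)) ∪
    ((Ω.filter (fun p => p.1 = k ∨ p.2 = k)).image (fun p => (p.2, p.1)))

/-- the symmetric bilinear form `(α_i, α_j)_{C,D} = c_i c_{ij}`. -/
def symBil (A : CartanPair n) (x y : Fin n → ℤ) : ℤ :=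
  ∑ i, ∑ j, (A.d i * A.c i j) * x i * y j

/-- `C` is of Dynkin type iff `(−,−)_{C,D}` is positive definite. -/
def IsDynkin (A : CartanPair n) : Prop := ∀ x : Fin n → ℤ, x ≠ 0 → 0 < symBil A x x

/-- the nonsymmetric bilinear form `⟨−,−⟩_{C,D,Ω}`. -/
def nsymBil (A : CartanPair n) (Ω : Finset (Fin n × Fin n)) (x y : Fin n → ℤ) : ℤ :=
  ∑ i, ∑ j, (if i = j then A.d i else if (j,i) ∈ Ω then A.d i * A.c i j else 0) * x i * y j

/-- the simple reflection `s_i` as a plain function on `ℤ^I`. -/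
def reflFun (A : CartanPair n) (i : Fin n) (x : Fin n → ℤ) : Fin n → ℤ :=
  fun k => x k - (if k = i then ∑ j, A.c i j * x j else 0)

section Algebras

variable (K : Type) [Field K]

/-- generators for the algebras `H` and `Π`: idempotents `vtx i`, loops `lp i`,
and arrows `arr i j k = α_{ij}^{(k)} : j → i`. -/
inductive Gen (n : ℕ) : Type
  | vtx : Fin n → Gen n
  | lp : Fin n → Gen n
  | arr : Fin n → Fin n → ℕ → Gen n

/-- the free algebra on the generators. -/
abbrev FA (n : ℕ) := FreeAlgebra K (Gen n)

/-- the canonical image of a generator. -/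
def gen (x : Gen n) : FA K n := FreeAlgebra.ι K x

/-- Defining relations of `H = H_K(C,D,Ω)` (together with the path-algebra relations
for the idempotents `e_i`). -/
inductive HRel (A : CartanPair n) (Ω : Finset (Fin n × Fin n)) : FA K n → FA K n → Prop
  | idem (i j : Fin n) :
      HRel A Ω (gen K (.vtx i) * gen K (.vtx j)) (if i = j then gen K (.vtx i) else 0)
  | sum_one : HRel A Ω (∑ i, gen K (.vtx i)) 1
  | lp_comp (i : Fin n) :
      HRel A Ω (gen K (.vtx i) * gen K (.lp i) * gen K (.vtx i)) (gen K (.lp i))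
  | arr_comp (i j : Fin n) (k : ℕ) :
      HRel A Ω (gen K (.vtx i) * gen K (.arr i j k) * gen K (.vtx j)) (gen K (.arr i j k))
  | arr_invalid (i j : Fin n) (k : ℕ) (h : ¬((i,j) ∈ Ω ∧ k < gij A i j)) :
      HRel A Ω (gen K (.arr i j k)) 0
  | lp_nil (i : Fin n) : HRel A Ω (gen K (.lp i) ^ (A.d i).toNat) 0
  | comm (i j : Fin n) (k : ℕ) (h : (i,j) ∈ Ω) (hk : k < gij A i j) :
      HRel A Ω (gen K (.lp i) ^ expo A i j * gen K (.arr i j k))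
               (gen K (.arr i j k) * gen K (.lp j) ^ expo A j i)

/-- pin the `Semiring` structure of quotients of the free algebra to the one coming
from the `Ring` structure (avoids non-syntactic instance mismatches). -/
noncomputable instance (priority := 5000) ringQuotSemiring
    (r : FA K n → FA K n → Prop) : Semiring (RingQuot r) :=
  Ring.toSemiring

/-- the algebra `H = H_K(C,D,Ω)`. -/
abbrev HAlg (A : CartanPair n) (Ω : Finset (Fin n × Fin n)) := RingQuot (HRel K A Ω)

/-- the idempotent `e_i ∈ H`. -/
def eV (A : CartanPair n) (Ω : Finset (Fin n × Fin n)) (i : Fin n) : HAlg K A Ω :=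
  RingQuot.mkAlgHom K (HRel K A Ω) (gen K (.vtx i))

/-- the loop `ε_i ∈ H`. -/
def eL (A : CartanPair n) (Ω : Finset (Fin n × Fin n)) (i : Fin n) : HAlg K A Ω :=
  RingQuot.mkAlgHom K (HRel K A Ω) (gen K (.lp i))

/-- the arrow `α_{ij}^{(k)} ∈ H`. -/
def eA (A : CartanPair n) (Ω : Finset (Fin n × Fin n)) (i j : Fin n) (k : ℕ) : HAlg K A Ω :=
  RingQuot.mkAlgHom K (HRel K A Ω) (gen K (.arr i j k))

/-- `H_i = K[ε]/(ε^m)`. -/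
abbrev Ai (m : ℕ) : Type := Polynomial K ⧸ Ideal.span {(Polynomial.X : Polynomial K) ^ m}

/-- the image of `X` in `K[ε]/(ε^m)`. -/
noncomputable def xAi (m : ℕ) : Ai K m := Ideal.Quotient.mk _ Polynomial.X

/-- `M` is locally free with rank vector `r`: there is a `K`-linear trivialization under
which `e_i` acts as the projection to the `i`-th block and `ε_i` acts as multiplication
by `X` on the `i`-th block `(K[ε]/(ε^{c_i}))^{r_i}`. -/
def IsLFRk (A : CartanPair n) (Ω : Finset (Fin n × Fin n)) (M : Type)
    [AddCommGroup M] [Module K M] [Module (HAlg K A Ω) M] (r : Fin n → ℕ) : Prop :=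
  ∃ ψ : M ≃ₗ[K] ((i : Fin n) → Fin (r i) → Ai K (A.d i).toNat),
    (∀ (i : Fin n) (m : M) (j : Fin n),
        ψ (eV K A Ω i • m) j = if j = i then ψ m j else 0) ∧
    (∀ (i : Fin n) (m : M) (j : Fin n),
        ψ (eL K A Ω i • m) j = if j = i then (fun t => xAi K (A.d j).toNat * ψ m j t) else 0)

/-- `M` is locally free. -/
def IsLF (A : CartanPair n) (Ω : Finset (Fin n × Fin n)) (M : Type)
    [AddCommGroup M] [Module K M] [Module (HAlg K A Ω) M] : Prop :=
  ∃ r, IsLFRk K A Ω M r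

end Algebras

end GLS

namespace GLS

noncomputable section


open scoped TensorProduct

variable {n : ℕ} (K : Type) [Field K] (A : CartanPair n) (Ω : Finset (Fin n × Fin n))

/-- the subalgebra `S = ∏_i H_i ⊆ H`, generated by the idempotents and the loops. -/
def Ssub : Subalgebra K (HAlg K A Ω) :=
  Algebra.adjoin K (Set.range (eV K A Ω) ∪ Set.range (eL K A Ω))

/-- the `S`-`S`-bimodule `B = ⊕_{(i,j) ∈ Ω} {}_iH_j ⊆ H`, spanned by the elements
`ε_i^a α_{ij}^{(k)} ε_j^b`. -/
def Bsub : Submodule K (HAlg K A Ω) :=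
  Submodule.span K {x | ∃ (i j : Fin n) (k a b : ℕ), (i,j) ∈ Ω ∧ k < gij A i j ∧
    x = eL K A Ω i ^ a * eA K A Ω i j k * eL K A Ω j ^ b}

/-- the balancing submodule defining `H ⊗_S H` as a quotient of `H ⊗_K H`. -/
def bal1 : Submodule K (HAlg K A Ω ⊗[K] HAlg K A Ω) :=
  Submodule.span K {x | ∃ (h h' s : HAlg K A Ω), s ∈ Ssub K A Ω ∧
    x = (h * s) ⊗ₜ[K] h' - h ⊗ₜ[K] (s * h')}

/-- `H ⊗_S H`. -/
def THH : Type := @HasQuotient.Quotient _ _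
  (Submodule.hasQuotient (M := HAlg K A Ω ⊗[K] HAlg K A Ω) (R := K)) (bal1 K A Ω)

noncomputable instance : AddCommGroup (THH K A Ω) := by unfold THH; infer_instance
noncomputable instance : Module K (THH K A Ω) := by unfold THH; infer_instance

/-- class of a pure tensor in `H ⊗_S H`. -/
noncomputable def mk1 (h h' : HAlg K A Ω) : THH K A Ω :=
  Submodule.Quotient.mk (h ⊗ₜ[K] h')

noncomputable instance acg3 :
    AddCommGroup (HAlg K A Ω ⊗[K] (↥(Bsub K A Ω) ⊗[K] HAlg K A Ω)) :=
  TensorProduct.addCommGroup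

noncomputable instance mod3 :
    Module K (HAlg K A Ω ⊗[K] (↥(Bsub K A Ω) ⊗[K] HAlg K A Ω)) :=
  TensorProduct.instModule

/-- the balancing submodule defining `H ⊗_S B ⊗_S H` as a quotient of `H ⊗_K B ⊗_K H`. -/
def bal2 : Submodule K (HAlg K A Ω ⊗[K] (↥(Bsub K A Ω) ⊗[K] HAlg K A Ω)) :=
  Submodule.span K
    ({x | ∃ (h h' s : HAlg K A Ω) (b b' : ↥(Bsub K A Ω)), s ∈ Ssub K A Ω ∧
        (b' : HAlg K A Ω) = s * (b : HAlg K A Ω) ∧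
        x = (h * s) ⊗ₜ[K] ((b : ↥(Bsub K A Ω)) ⊗ₜ[K] h') - h ⊗ₜ[K] (b' ⊗ₜ[K] h')} ∪
     {x | ∃ (h h' s : HAlg K A Ω) (b b' : ↥(Bsub K A Ω)), s ∈ Ssub K A Ω ∧
        (b' : HAlg K A Ω) = (b : HAlg K A Ω) * s ∧
        x = h ⊗ₜ[K] (b' ⊗ₜ[K] h') - h ⊗ₜ[K] ((b : ↥(Bsub K A Ω)) ⊗ₜ[K] (s * h'))})

/-- `H ⊗_S B ⊗_S H`. -/
def THBH : Type := (HAlg K A Ω ⊗[K] (↥(Bsub K A Ω) ⊗[K] HAlg K A Ω)) ⧸ bal2 K A Ω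

noncomputable instance : AddCommGroup (THBH K A Ω) := by unfold THBH; infer_instance
noncomputable instance : Module K (THBH K A Ω) := by unfold THBH; infer_instance

/-- class of a pure tensor in `H ⊗_S B ⊗_S H`. -/
noncomputable def mk2 (h : HAlg K A Ω) (b : ↥(Bsub K A Ω)) (h' : HAlg K A Ω) : THBH K A Ω :=
  Submodule.Quotient.mk (h ⊗ₜ[K] (b ⊗ₜ[K] h'))

/-! ### Auxiliary development for statement 2 -/

section Aux

/-! #### Relations in `H` -/

lemma rel_eq {x y : FA K n} (h : HRel K A Ω x y) :
    RingQuot.mkAlgHom K (HRel K A Ω) x = RingQuot.mkAlgHom K (HRel K A Ω) y :=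
  RingQuot.mkAlgHom_rel K h

lemma hV (i j : Fin n) :
    eV K A Ω i * eV K A Ω j = if i = j then eV K A Ω i else 0 := by
  have h := rel_eq K A Ω (HRel.idem i j)
  rw [map_mul] at h
  split_ifs with hij
  · subst hij; rw [if_pos rfl] at h; exact h
  · rw [if_neg hij, map_zero] at h; exact h

lemma eV_idem (i : Fin n) : eV K A Ω i * eV K A Ω i = eV K A Ω i := by
  rw [hV, if_pos rfl]

lemma hSum : (∑ i, eV K A Ω i) = 1 := by
  have h := rel_eq K A Ω (HRel.sum_one (A := A) (Ω := Ω))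
  rw [map_sum, map_one] at h
  exact h

lemma hLp (i : Fin n) : eV K A Ω i * eL K A Ω i * eV K A Ω i = eL K A Ω i := by
  have h := rel_eq K A Ω (HRel.lp_comp i)
  rw [map_mul, map_mul] at h
  exact h

lemma hArr (i j : Fin n) (k : ℕ) :
    eV K A Ω i * eA K A Ω i j k * eV K A Ω j = eA K A Ω i j k := by
  have h := rel_eq K A Ω (HRel.arr_comp i j k)
  rw [map_mul, map_mul] at h
  exact h

lemma hInv {i j : Fin n} {k : ℕ} (h : ¬((i,j) ∈ Ω ∧ k < gij A i j)) :
    eA K A Ω i j k = 0 := by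
  have h2 := rel_eq K A Ω (HRel.arr_invalid i j k h)
  rw [map_zero] at h2
  exact h2

lemma hNil (i : Fin n) : eL K A Ω i ^ (A.d i).toNat = 0 := by
  have h := rel_eq K A Ω (HRel.lp_nil (Ω := Ω) i)
  rw [map_pow, map_zero] at h
  exact h

lemma hComm {i j : Fin n} {k : ℕ} (h : (i,j) ∈ Ω) (hk : k < gij A i j) :
    eL K A Ω i ^ expo A i j * eA K A Ω i j k
      = eA K A Ω i j k * eL K A Ω j ^ expo A j i := by
  have h2 := rel_eq K A Ω (HRel.comm i j k h hk)
  rw [map_mul, map_mul, map_pow, map_pow] at h2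
  exact h2

lemma eV_mul_eA (i j : Fin n) (k : ℕ) :
    eV K A Ω i * eA K A Ω i j k = eA K A Ω i j k := by
  have h1 := hArr K A Ω i j k
  have h2 : eV K A Ω i * (eV K A Ω i * eA K A Ω i j k * eV K A Ω j)
      = eV K A Ω i * eA K A Ω i j k * eV K A Ω j := by
    rw [← mul_assoc, ← mul_assoc, eV_idem]
  rw [h1] at h2
  exact h2

lemma eA_mul_eV (i j : Fin n) (k : ℕ) :
    eA K A Ω i j k * eV K A Ω j = eA K A Ω i j k := by
  have h1 := hArr K A Ω i j k
  have h2 : eV K A Ω i * eA K A Ω i j k * eV K A Ω j * eV K A Ω j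
      = eV K A Ω i * eA K A Ω i j k * eV K A Ω j := by
    rw [mul_assoc, eV_idem]
  rw [h1] at h2
  exact h2

/-! #### Membership lemmas -/

lemma eV_mem (i : Fin n) : eV K A Ω i ∈ Ssub K A Ω :=
  Algebra.subset_adjoin (Or.inl ⟨i, rfl⟩)

lemma eL_mem (i : Fin n) : eL K A Ω i ∈ Ssub K A Ω :=
  Algebra.subset_adjoin (Or.inr ⟨i, rfl⟩)

lemma eL_pow_mem (i : Fin n) (a : ℕ) : eL K A Ω i ^ a ∈ Ssub K A Ω :=
  pow_mem (eL_mem K A Ω i) a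

lemma gen_mem {i j : Fin n} {k : ℕ} (a b : ℕ) (h1 : (i,j) ∈ Ω) (h2 : k < gij A i j) :
    eL K A Ω i ^ a * eA K A Ω i j k * eL K A Ω j ^ b ∈ Bsub K A Ω :=
  Submodule.subset_span ⟨i, j, k, a, b, h1, h2, rfl⟩

lemma eA_mem {i j : Fin n} {k : ℕ} (h1 : (i,j) ∈ Ω) (h2 : k < gij A i j) :
    eA K A Ω i j k ∈ Bsub K A Ω := by
  simpa [pow_zero, one_mul, mul_one] using gen_mem K A Ω 0 0 h1 h2

lemma eLa_eA_mem {i j : Fin n} {k : ℕ} (a : ℕ) (h1 : (i,j) ∈ Ω) (h2 : k < gij A i j) :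
    eL K A Ω i ^ a * eA K A Ω i j k ∈ Bsub K A Ω := by
  simpa [pow_zero, mul_one] using gen_mem K A Ω a 0 h1 h2

lemma eA_eLb_mem {i j : Fin n} {k : ℕ} (b : ℕ) (h1 : (i,j) ∈ Ω) (h2 : k < gij A i j) :
    eA K A Ω i j k * eL K A Ω j ^ b ∈ Bsub K A Ω := by
  simpa [pow_zero, one_mul] using gen_mem K A Ω 0 b h1 h2

/-! #### linearity lemmas for `mk1` and `mk2` -/

lemma mk1_def (h h' : HAlg K A Ω) :
    mk1 K A Ω h h' = Submodule.Quotient.mk (h ⊗ₜ[K] h') := rfl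

lemma mk2_def (h : HAlg K A Ω) (b : ↥(Bsub K A Ω)) (h' : HAlg K A Ω) :
    mk2 K A Ω h b h' = Submodule.Quotient.mk (h ⊗ₜ[K] (b ⊗ₜ[K] h')) := rfl

@[simp] lemma mk1_add_left (h₁ h₂ h' : HAlg K A Ω) :
    mk1 K A Ω (h₁ + h₂) h' = mk1 K A Ω h₁ h' + mk1 K A Ω h₂ h' := by
  simp only [mk1_def, TensorProduct.add_tmul, Submodule.Quotient.mk_add]
  rfl

@[simp] lemma mk1_add_right (h h₁ h₂ : HAlg K A Ω) :
    mk1 K A Ω h (h₁ + h₂) = mk1 K A Ω h h₁ + mk1 K A Ω h h₂ := by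
  simp only [mk1_def, TensorProduct.tmul_add, Submodule.Quotient.mk_add]
  rfl

@[simp] lemma mk1_smul_left (c : K) (h h' : HAlg K A Ω) :
    mk1 K A Ω (c • h) h' = c • mk1 K A Ω h h' := by
  rw [mk1_def, mk1_def, ← TensorProduct.smul_tmul', Submodule.Quotient.mk_smul]
  rfl

@[simp] lemma mk1_smul_right (c : K) (h h' : HAlg K A Ω) :
    mk1 K A Ω h (c • h') = c • mk1 K A Ω h h' := by
  rw [mk1_def, mk1_def, TensorProduct.tmul_smul, Submodule.Quotient.mk_smul]
  rfl

@[simp] lemma mk1_zero_left (h' : HAlg K A Ω) : mk1 K A Ω 0 h' = 0 := by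
  simp only [mk1_def, TensorProduct.zero_tmul, Submodule.Quotient.mk_zero]
  rfl

@[simp] lemma mk1_zero_right (h : HAlg K A Ω) : mk1 K A Ω h 0 = 0 := by
  simp only [mk1_def, TensorProduct.tmul_zero, Submodule.Quotient.mk_zero]
  rfl

@[simp] lemma mk2_add_left (h₁ h₂ : HAlg K A Ω) (b : ↥(Bsub K A Ω)) (h' : HAlg K A Ω) :
    mk2 K A Ω (h₁ + h₂) b h' = mk2 K A Ω h₁ b h' + mk2 K A Ω h₂ b h' := by
  simp only [mk2_def, TensorProduct.add_tmul, Submodule.Quotient.mk_add]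
  rfl

@[simp] lemma mk2_add_mid (h : HAlg K A Ω) (b₁ b₂ : ↥(Bsub K A Ω)) (h' : HAlg K A Ω) :
    mk2 K A Ω h (b₁ + b₂) h' = mk2 K A Ω h b₁ h' + mk2 K A Ω h b₂ h' := by
  simp only [mk2_def, TensorProduct.add_tmul, TensorProduct.tmul_add,
    Submodule.Quotient.mk_add]
  rfl

@[simp] lemma mk2_add_right (h : HAlg K A Ω) (b : ↥(Bsub K A Ω)) (h₁ h₂ : HAlg K A Ω) :
    mk2 K A Ω h b (h₁ + h₂) = mk2 K A Ω h b h₁ + mk2 K A Ω h b h₂ := by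
  simp only [mk2_def, TensorProduct.tmul_add, Submodule.Quotient.mk_add]
  rfl

@[simp] lemma mk2_smul_left (c : K) (h : HAlg K A Ω) (b : ↥(Bsub K A Ω)) (h' : HAlg K A Ω) :
    mk2 K A Ω (c • h) b h' = c • mk2 K A Ω h b h' := by
  rw [mk2_def, mk2_def, ← TensorProduct.smul_tmul', Submodule.Quotient.mk_smul]
  rfl

@[simp] lemma mk2_smul_mid (c : K) (h : HAlg K A Ω) (b : ↥(Bsub K A Ω)) (h' : HAlg K A Ω) :
    mk2 K A Ω h (c • b) h' = c • mk2 K A Ω h b h' := by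
  simp only [mk2_def, TensorProduct.smul_tmul, TensorProduct.tmul_smul,
    Submodule.Quotient.mk_smul]
  rfl

@[simp] lemma mk2_smul_right (c : K) (h : HAlg K A Ω) (b : ↥(Bsub K A Ω)) (h' : HAlg K A Ω) :
    mk2 K A Ω h b (c • h') = c • mk2 K A Ω h b h' := by
  rw [mk2_def, mk2_def, TensorProduct.tmul_smul, TensorProduct.tmul_smul,
    Submodule.Quotient.mk_smul]
  rfl

@[simp] lemma mk2_zero_left (b : ↥(Bsub K A Ω)) (h' : HAlg K A Ω) :
    mk2 K A Ω 0 b h' = 0 := by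
  simp only [mk2_def, TensorProduct.zero_tmul, Submodule.Quotient.mk_zero]
  rfl

@[simp] lemma mk2_zero_mid (h : HAlg K A Ω) (h' : HAlg K A Ω) :
    mk2 K A Ω h 0 h' = 0 := by
  simp only [mk2_def, TensorProduct.zero_tmul, TensorProduct.tmul_zero,
    Submodule.Quotient.mk_zero]
  rfl

@[simp] lemma mk2_zero_right (h : HAlg K A Ω) (b : ↥(Bsub K A Ω)) :
    mk2 K A Ω h b 0 = 0 := by
  simp only [mk2_def, TensorProduct.tmul_zero, Submodule.Quotient.mk_zero]
  rfl

/-! #### the balancing relations -/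

lemma mk1_move (h h' s : HAlg K A Ω) (hs : s ∈ Ssub K A Ω) :
    mk1 K A Ω (h * s) h' = mk1 K A Ω h (s * h') := by
  rw [mk1_def, mk1_def]
  erw [Submodule.Quotient.eq]
  exact Submodule.subset_span ⟨h, h', s, hs, rfl⟩

lemma mk2_move_left (h h' s : HAlg K A Ω) (hs : s ∈ Ssub K A Ω)
    (b b' : ↥(Bsub K A Ω)) (hb : (b' : HAlg K A Ω) = s * (b : HAlg K A Ω)) :
    mk2 K A Ω (h * s) b h' = mk2 K A Ω h b' h' := by
  rw [mk2_def, mk2_def]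
  erw [Submodule.Quotient.eq]
  exact Submodule.subset_span (Or.inl ⟨h, h', s, b, b', hs, hb, rfl⟩)

lemma mk2_move_right (h h' s : HAlg K A Ω) (hs : s ∈ Ssub K A Ω)
    (b b' : ↥(Bsub K A Ω)) (hb : (b' : HAlg K A Ω) = (b : HAlg K A Ω) * s) :
    mk2 K A Ω h b' h' = mk2 K A Ω h b (s * h') := by
  rw [mk2_def, mk2_def]
  erw [Submodule.Quotient.eq]
  exact Submodule.subset_span (Or.inr ⟨h, h', s, b, b', hs, hb, rfl⟩)

/-! #### extensionality -/

lemma thh_ext {M : Type*} [AddCommGroup M] [Module K M] {f g : THH K A Ω →ₗ[K] M}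
    (hfg : ∀ a b, f (mk1 K A Ω a b) = g (mk1 K A Ω a b)) : f = g := by
  ext x
  have hs := @Submodule.Quotient.mk_surjective K (HAlg K A Ω ⊗[K] HAlg K A Ω) _ _ _ (bal1 K A Ω)
  obtain ⟨t, rfl⟩ := hs x
  induction t with
  | zero => erw [Submodule.Quotient.mk_zero, map_zero, map_zero]
  | tmul a b => exact hfg a b
  | add a b iha ihb => erw [Submodule.Quotient.mk_add, map_add, map_add, iha, ihb]

lemma thbh_ext {M : Type*} [AddCommGroup M] [Module K M] {f g : THBH K A Ω →ₗ[K] M}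
    (hfg : ∀ a b c, f (mk2 K A Ω a b c) = g (mk2 K A Ω a b c)) : f = g := by
  ext x
  obtain ⟨t, rfl⟩ := Submodule.Quotient.mk_surjective (bal2 K A Ω) x
  induction t with
  | zero => erw [Submodule.Quotient.mk_zero, map_zero, map_zero]
  | tmul a bc =>
      induction bc with
      | zero => erw [TensorProduct.tmul_zero, Submodule.Quotient.mk_zero, map_zero, map_zero]
      | tmul b c => exact hfg a b c
      | add u v ihu ihv =>
          erw [TensorProduct.tmul_add, Submodule.Quotient.mk_add, map_add, map_add, ihu, ihv]
  | add a b iha ihb => erw [Submodule.Quotient.mk_add, map_add, map_add, iha, ihb]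

/-! #### the actions -/

noncomputable def lact1 (a : HAlg K A Ω) : THH K A Ω →ₗ[K] THH K A Ω :=
  (Submodule.mapQ (R := K) (M := HAlg K A Ω ⊗[K] HAlg K A Ω) (R₂ := K)
    (M₂ := HAlg K A Ω ⊗[K] HAlg K A Ω) (τ₁₂ := RingHom.id K) (bal1 K A Ω) (bal1 K A Ω)
    (TensorProduct.map (LinearMap.mulLeft K a) LinearMap.id)
    (by
      refine Submodule.span_le.mpr ?_
      rintro x ⟨h, h', s, hs, rfl⟩
      simp only [SetLike.mem_coe, Submodule.mem_comap, map_sub, TensorProduct.map_tmul,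
        LinearMap.mulLeft_apply, LinearMap.id_coe, id_eq]
      refine Submodule.subset_span ⟨a * h, h', s, hs, ?_⟩
      rw [mul_assoc]) :)

noncomputable def ract1 (a : HAlg K A Ω) : THH K A Ω →ₗ[K] THH K A Ω :=
  (Submodule.mapQ (R := K) (M := HAlg K A Ω ⊗[K] HAlg K A Ω) (R₂ := K)
    (M₂ := HAlg K A Ω ⊗[K] HAlg K A Ω) (τ₁₂ := RingHom.id K) (bal1 K A Ω) (bal1 K A Ω)
    (TensorProduct.map LinearMap.id (LinearMap.mulRight K a))
    (by
      refine Submodule.span_le.mpr ?_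
      rintro x ⟨h, h', s, hs, rfl⟩
      simp only [SetLike.mem_coe, Submodule.mem_comap, map_sub, TensorProduct.map_tmul,
        LinearMap.mulRight_apply, LinearMap.id_coe, id_eq]
      refine Submodule.subset_span ⟨h, h' * a, s, hs, ?_⟩
      rw [mul_assoc]) :)

noncomputable def lact2 (a : HAlg K A Ω) : THBH K A Ω →ₗ[K] THBH K A Ω :=
  Submodule.mapQ (bal2 K A Ω) (bal2 K A Ω)
    (TensorProduct.map (LinearMap.mulLeft K a) LinearMap.id)
    (by
      refine Submodule.span_le.mpr ?_
      rintro x (⟨h, h', s, b, b', hs, hb, rfl⟩ | ⟨h, h', s, b, b', hs, hb, rfl⟩) <;>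
        simp only [SetLike.mem_coe, Submodule.mem_comap, map_sub, TensorProduct.map_tmul,
          LinearMap.mulLeft_apply, LinearMap.id_coe, id_eq]
      · refine Submodule.subset_span (Or.inl ⟨a * h, h', s, b, b', hs, hb, ?_⟩)
        rw [mul_assoc]
      · exact Submodule.subset_span (Or.inr ⟨a * h, h', s, b, b', hs, hb, rfl⟩))

noncomputable def ract2 (a : HAlg K A Ω) : THBH K A Ω →ₗ[K] THBH K A Ω :=
  Submodule.mapQ (bal2 K A Ω) (bal2 K A Ω)
    (TensorProduct.map LinearMap.id
      (TensorProduct.map LinearMap.id (LinearMap.mulRight K a)))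
    (by
      refine Submodule.span_le.mpr ?_
      rintro x (⟨h, h', s, b, b', hs, hb, rfl⟩ | ⟨h, h', s, b, b', hs, hb, rfl⟩) <;>
        simp only [SetLike.mem_coe, Submodule.mem_comap, map_sub, TensorProduct.map_tmul,
          LinearMap.mulRight_apply, LinearMap.id_coe, id_eq]
      · exact Submodule.subset_span (Or.inl ⟨h, h' * a, s, b, b', hs, hb, rfl⟩)
      · refine Submodule.subset_span (Or.inr ⟨h, h' * a, s, b, b', hs, hb, ?_⟩)
        rw [mul_assoc])

@[simp] lemma lact1_mk1 (a h h' : HAlg K A Ω) :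
    lact1 K A Ω a (mk1 K A Ω h h') = mk1 K A Ω (a * h) h' := rfl

@[simp] lemma ract1_mk1 (a h h' : HAlg K A Ω) :
    ract1 K A Ω a (mk1 K A Ω h h') = mk1 K A Ω h (h' * a) := rfl

@[simp] lemma lact2_mk2 (a h : HAlg K A Ω) (b : ↥(Bsub K A Ω)) (h' : HAlg K A Ω) :
    lact2 K A Ω a (mk2 K A Ω h b h') = mk2 K A Ω (a * h) b h' := rfl

@[simp] lemma ract2_mk2 (a h : HAlg K A Ω) (b : ↥(Bsub K A Ω)) (h' : HAlg K A Ω) :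
    ract2 K A Ω a (mk2 K A Ω h b h') = mk2 K A Ω h b (h' * a) := rfl

/-! #### pointwise algebra lemmas for the actions -/

lemma lact2_one_apply (m : THBH K A Ω) : lact2 K A Ω 1 m = m := by
  have h : lact2 K A Ω 1 = LinearMap.id :=
    thbh_ext K A Ω (fun x y z => by simp)
  rw [h, LinearMap.id_apply]

lemma ract2_one_apply (m : THBH K A Ω) : ract2 K A Ω 1 m = m := by
  have h : ract2 K A Ω 1 = LinearMap.id :=
    thbh_ext K A Ω (fun x y z => by simp)
  rw [h, LinearMap.id_apply]

lemma lact2_mul_apply (a b : HAlg K A Ω) (m : THBH K A Ω) :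
    lact2 K A Ω (a * b) m = lact2 K A Ω a (lact2 K A Ω b m) := by
  have h : lact2 K A Ω (a * b) = (lact2 K A Ω a).comp (lact2 K A Ω b) :=
    thbh_ext K A Ω (fun x y z => by simp [mul_assoc])
  rw [h, LinearMap.comp_apply]

lemma ract2_mul_apply (a b : HAlg K A Ω) (m : THBH K A Ω) :
    ract2 K A Ω (a * b) m = ract2 K A Ω b (ract2 K A Ω a m) := by
  have h : ract2 K A Ω (a * b) = (ract2 K A Ω b).comp (ract2 K A Ω a) :=
    thbh_ext K A Ω (fun x y z => by simp [mul_assoc])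
  rw [h, LinearMap.comp_apply]

lemma lact2_add_apply (a b : HAlg K A Ω) (m : THBH K A Ω) :
    lact2 K A Ω (a + b) m = lact2 K A Ω a m + lact2 K A Ω b m := by
  have h : lact2 K A Ω (a + b) = lact2 K A Ω a + lact2 K A Ω b :=
    thbh_ext K A Ω (fun x y z => by simp [add_mul])
  rw [h, LinearMap.add_apply]

lemma ract2_add_apply (a b : HAlg K A Ω) (m : THBH K A Ω) :
    ract2 K A Ω (a + b) m = ract2 K A Ω a m + ract2 K A Ω b m := by
  have h : ract2 K A Ω (a + b) = ract2 K A Ω a + ract2 K A Ω b :=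
    thbh_ext K A Ω (fun x y z => by simp [mul_add])
  rw [h, LinearMap.add_apply]

lemma lact2_zero_apply (m : THBH K A Ω) : lact2 K A Ω 0 m = 0 := by
  have h : lact2 K A Ω 0 = 0 :=
    thbh_ext K A Ω (fun x y z => by simp)
  rw [h, LinearMap.zero_apply]

lemma ract2_zero_apply (m : THBH K A Ω) : ract2 K A Ω 0 m = 0 := by
  have h : ract2 K A Ω 0 = 0 :=
    thbh_ext K A Ω (fun x y z => by simp)
  rw [h, LinearMap.zero_apply]

lemma lact2_smul_apply (c : K) (a : HAlg K A Ω) (m : THBH K A Ω) :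
    lact2 K A Ω (c • a) m = c • lact2 K A Ω a m := by
  have h : lact2 K A Ω (c • a) = c • lact2 K A Ω a :=
    thbh_ext K A Ω (fun x y z => by simp [smul_mul_assoc])
  rw [h, LinearMap.smul_apply]

lemma ract2_smul_apply (c : K) (a : HAlg K A Ω) (m : THBH K A Ω) :
    ract2 K A Ω (c • a) m = c • ract2 K A Ω a m := by
  have h : ract2 K A Ω (c • a) = c • ract2 K A Ω a :=
    thbh_ext K A Ω (fun x y z => by simp [mul_smul_comm])
  rw [h, LinearMap.smul_apply]

lemma lact2_ract2_apply (a b : HAlg K A Ω) (m : THBH K A Ω) :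
    lact2 K A Ω a (ract2 K A Ω b m) = ract2 K A Ω b (lact2 K A Ω a m) := by
  have h : (lact2 K A Ω a).comp (ract2 K A Ω b)
      = (ract2 K A Ω b).comp (lact2 K A Ω a) :=
    thbh_ext K A Ω (fun x y z => by simp)
  exact DFunLike.congr_fun h m

/-! #### the multiplication map -/

noncomputable def mul1 : THH K A Ω →ₗ[K] HAlg K A Ω :=
  (Submodule.liftQ (R := K) (M := HAlg K A Ω ⊗[K] HAlg K A Ω) (R₂ := K)
    (τ₁₂ := RingHom.id K) (bal1 K A Ω) (TensorProduct.lift (LinearMap.mul K (HAlg K A Ω)))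
    (by
      refine Submodule.span_le.mpr ?_
      rintro x ⟨h, h', s, hs, rfl⟩
      simp only [SetLike.mem_coe, LinearMap.mem_ker, map_sub, TensorProduct.lift.tmul,
        LinearMap.mul_apply', mul_assoc, sub_self]) :)

@[simp] lemma mul1_mk1 (h h' : HAlg K A Ω) : mul1 K A Ω (mk1 K A Ω h h') = h * h' := rfl

/-! #### the map δ -/

noncomputable def dform (h : HAlg K A Ω) :
    (↥(Bsub K A Ω) ⊗[K] HAlg K A Ω) →ₗ[K] THH K A Ω :=
  TensorProduct.lift (LinearMap.mk₂ K
    (fun b h' => mk1 K A Ω (h * (b : HAlg K A Ω)) h' - mk1 K A Ω h ((b : HAlg K A Ω) * h'))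
    (fun b₁ b₂ h' => by
      simp only [Submodule.coe_add, mul_add, add_mul, mk1_add_left, mk1_add_right]
      abel)
    (fun c b h' => by
      simp only [SetLike.val_smul, mul_smul_comm, smul_mul_assoc, mk1_smul_left,
        mk1_smul_right, smul_sub])
    (fun b h₁ h₂ => by
      simp only [mul_add, mk1_add_right]
      abel)
    (fun c b h' => by
      simp only [mul_smul_comm, mk1_smul_right, smul_sub]))

@[simp] lemma dform_tmul (h : HAlg K A Ω) (b : ↥(Bsub K A Ω)) (h' : HAlg K A Ω) :
    dform K A Ω h (b ⊗ₜ[K] h')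
      = mk1 K A Ω (h * (b : HAlg K A Ω)) h' - mk1 K A Ω h ((b : HAlg K A Ω) * h') := rfl

noncomputable def delta0 :
    (HAlg K A Ω ⊗[K] (↥(Bsub K A Ω) ⊗[K] HAlg K A Ω)) →ₗ[K] THH K A Ω :=
  TensorProduct.lift
    { toFun := dform K A Ω
      map_add' := fun h₁ h₂ => by
        apply TensorProduct.ext'
        intro b h'
        simp only [dform_tmul, LinearMap.add_apply, add_mul, mk1_add_left, mk1_add_right]
        abel
      map_smul' := fun c h => by
        apply TensorProduct.ext'
        intro b h'
        simp only [dform_tmul, RingHom.id_apply, LinearMap.smul_apply, smul_mul_assoc,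
          mk1_smul_left, smul_sub] }

@[simp] lemma delta0_tmul (h : HAlg K A Ω) (b : ↥(Bsub K A Ω)) (h' : HAlg K A Ω) :
    delta0 K A Ω (h ⊗ₜ[K] (b ⊗ₜ[K] h'))
      = mk1 K A Ω (h * (b : HAlg K A Ω)) h' - mk1 K A Ω h ((b : HAlg K A Ω) * h') := rfl

noncomputable def delta : THBH K A Ω →ₗ[K] THH K A Ω :=
  Submodule.liftQ (bal2 K A Ω) (delta0 K A Ω)
    (by
      refine Submodule.span_le.mpr ?_
      rintro x (⟨h, h', s, b, b', hs, hb, rfl⟩ | ⟨h, h', s, b, b', hs, hb, rfl⟩) <;>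
        simp only [SetLike.mem_coe, LinearMap.mem_ker, map_sub, delta0_tmul, hb]
      · have e1 : h * s * (b : HAlg K A Ω) = h * (s * (b : HAlg K A Ω)) := mul_assoc _ _ _
        have e2 : mk1 K A Ω (h * s) ((b : HAlg K A Ω) * h')
            = mk1 K A Ω h (s * ((b : HAlg K A Ω) * h')) := mk1_move K A Ω h _ s hs
        have e3 : s * (b : HAlg K A Ω) * h' = s * ((b : HAlg K A Ω) * h') := mul_assoc _ _ _
        rw [e1, e2, e3]
        abel
      · have e1 : h * ((b : HAlg K A Ω) * s) = h * (b : HAlg K A Ω) * s :=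
          (mul_assoc _ _ _).symm
        have e2 : mk1 K A Ω (h * (b : HAlg K A Ω) * s) h'
            = mk1 K A Ω (h * (b : HAlg K A Ω)) (s * h') := mk1_move K A Ω _ _ s hs
        have e3 : (b : HAlg K A Ω) * s * h' = (b : HAlg K A Ω) * (s * h') := mul_assoc _ _ _
        rw [e1, e2, e3]
        abel)

@[simp] lemma delta_mk2 (h : HAlg K A Ω) (b : ↥(Bsub K A Ω)) (h' : HAlg K A Ω) :
    delta K A Ω (mk2 K A Ω h b h')
      = mk1 K A Ω (h * (b : HAlg K A Ω)) h' - mk1 K A Ω h ((b : HAlg K A Ω) * h') := rfl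

/-! #### the trivial square-zero extension `ExtA = H × (H ⊗ B ⊗ H)` -/

abbrev ExtA : Type := HAlg K A Ω × THBH K A Ω

noncomputable def extMul (x y : ExtA K A Ω) : ExtA K A Ω :=
  (x.1 * y.1, lact2 K A Ω x.1 y.2 + ract2 K A Ω y.1 x.2)

noncomputable instance : Ring (ExtA K A Ω) :=
  { (inferInstance : AddCommGroup (ExtA K A Ω)) with
    mul := extMul K A Ω
    one := (1, 0)
    mul_assoc := fun x y z => by
      refine Prod.ext ?_ ?_
      · exact mul_assoc x.1 y.1 z.1
      · show lact2 K A Ω (x.1 * y.1) z.2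
              + ract2 K A Ω z.1 (lact2 K A Ω x.1 y.2 + ract2 K A Ω y.1 x.2)
            = lact2 K A Ω x.1 (lact2 K A Ω y.1 z.2 + ract2 K A Ω z.1 y.2)
              + ract2 K A Ω (y.1 * z.1) x.2
        rw [map_add, map_add, lact2_mul_apply, ract2_mul_apply, lact2_ract2_apply]
        abel
    one_mul := fun x => by
      refine Prod.ext ?_ ?_
      · exact one_mul x.1
      · show lact2 K A Ω 1 x.2 + ract2 K A Ω x.1 0 = x.2
        rw [lact2_one_apply, map_zero, add_zero]
    mul_one := fun x => by
      refine Prod.ext ?_ ?_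
      · exact mul_one x.1
      · show lact2 K A Ω x.1 0 + ract2 K A Ω 1 x.2 = x.2
        rw [ract2_one_apply, map_zero, zero_add]
    left_distrib := fun x y z => by
      refine Prod.ext ?_ ?_
      · exact mul_add x.1 y.1 z.1
      · show lact2 K A Ω x.1 (y.2 + z.2) + ract2 K A Ω (y.1 + z.1) x.2
            = lact2 K A Ω x.1 y.2 + ract2 K A Ω y.1 x.2
              + (lact2 K A Ω x.1 z.2 + ract2 K A Ω z.1 x.2)
        rw [map_add, ract2_add_apply]
        abel
    right_distrib := fun x y z => by
      refine Prod.ext ?_ ?_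
      · exact add_mul x.1 y.1 z.1
      · show lact2 K A Ω (x.1 + y.1) z.2 + ract2 K A Ω z.1 (x.2 + y.2)
            = lact2 K A Ω x.1 z.2 + ract2 K A Ω z.1 x.2
              + (lact2 K A Ω y.1 z.2 + ract2 K A Ω z.1 y.2)
        rw [map_add, lact2_add_apply]
        abel
    zero_mul := fun x => by
      refine Prod.ext ?_ ?_
      · exact zero_mul x.1
      · show lact2 K A Ω 0 x.2 + ract2 K A Ω x.1 0 = 0
        rw [lact2_zero_apply, map_zero, add_zero]
    mul_zero := fun x => by
      refine Prod.ext ?_ ?_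
      · exact mul_zero x.1
      · show lact2 K A Ω x.1 0 + ract2 K A Ω 0 x.2 = 0
        rw [ract2_zero_apply, map_zero, zero_add] }

noncomputable instance : Algebra K (ExtA K A Ω) :=
  Algebra.ofModule
    (fun r x y => by
      refine Prod.ext ?_ ?_
      · show r • x.1 * y.1 = r • (x.1 * y.1)
        exact smul_mul_assoc r x.1 y.1
      · show lact2 K A Ω (r • x.1) y.2 + ract2 K A Ω y.1 (r • x.2)
            = r • (lact2 K A Ω x.1 y.2 + ract2 K A Ω y.1 x.2)
        rw [lact2_smul_apply, map_smul, smul_add])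
    (fun r x y => by
      refine Prod.ext ?_ ?_
      · show x.1 * (r • y.1) = r • (x.1 * y.1)
        exact mul_smul_comm r x.1 y.1
      · show lact2 K A Ω x.1 (r • y.2) + ract2 K A Ω (r • y.1) x.2
            = r • (lact2 K A Ω x.1 y.2 + ract2 K A Ω y.1 x.2)
        rw [ract2_smul_apply, map_smul, smul_add])

@[simp] lemma extA_algebraMap_fst (r : K) :
    (algebraMap K (ExtA K A Ω) r).1 = algebraMap K (HAlg K A Ω) r := by
  rw [Algebra.algebraMap_eq_smul_one, Algebra.algebraMap_eq_smul_one]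
  rfl

noncomputable def inlE : HAlg K A Ω →ₐ[K] ExtA K A Ω where
  toFun a := (a, 0)
  map_one' := rfl
  map_mul' a b := by
    refine Prod.ext ?_ ?_
    · rfl
    · show (0 : THBH K A Ω) = lact2 K A Ω a 0 + ract2 K A Ω b 0
      rw [map_zero, map_zero, add_zero]
  map_zero' := rfl
  map_add' a b := rfl
  commutes' r := by
    have h1 : (algebraMap K (ExtA K A Ω) r) = r • (1 : ExtA K A Ω) :=
      Algebra.algebraMap_eq_smul_one r
    rw [h1]
    refine Prod.ext ?_ ?_
    · show algebraMap K (HAlg K A Ω) r = r • (1 : HAlg K A Ω)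
      exact Algebra.algebraMap_eq_smul_one r
    · show (0 : THBH K A Ω) = r • (0 : THBH K A Ω)
      rw [smul_zero]

noncomputable def fstA : ExtA K A Ω →ₐ[K] HAlg K A Ω where
  toFun := Prod.fst
  map_one' := rfl
  map_mul' x y := rfl
  map_zero' := rfl
  map_add' x y := rfl
  commutes' r := extA_algebraMap_fst K A Ω r

@[simp] lemma inlE_fst (a : HAlg K A Ω) : (inlE K A Ω a).1 = a := rfl
@[simp] lemma inlE_snd (a : HAlg K A Ω) : (inlE K A Ω a).2 = 0 := rfl

lemma inl_mul_snd (a : HAlg K A Ω) (x : ExtA K A Ω) :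
    (inlE K A Ω a * x).2 = lact2 K A Ω a x.2 := by
  show lact2 K A Ω a x.2 + ract2 K A Ω x.1 0 = lact2 K A Ω a x.2
  rw [map_zero, add_zero]

lemma mul_inl_snd (x : ExtA K A Ω) (a : HAlg K A Ω) :
    (x * inlE K A Ω a).2 = ract2 K A Ω a x.2 := by
  show lact2 K A Ω x.1 0 + ract2 K A Ω a x.2 = ract2 K A Ω a x.2
  rw [map_zero, zero_add]

/-! #### the derivation via an algebra map `H → ExtA` -/

noncomputable def genVal : Gen n → ExtA K A Ω
  | .vtx i => inlE K A Ω (eV K A Ω i)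
  | .lp i => inlE K A Ω (eL K A Ω i)
  | .arr i j k =>
      (eA K A Ω i j k,
        if h : (i,j) ∈ Ω ∧ k < gij A i j
        then mk2 K A Ω 1 ⟨eA K A Ω i j k, eA_mem K A Ω h.1 h.2⟩ 1 else 0)

noncomputable def Psi : FA K n →ₐ[K] ExtA K A Ω := FreeAlgebra.lift K (genVal K A Ω)

@[simp] lemma Psi_iota (x : Gen n) :
    Psi K A Ω (FreeAlgebra.ι K x) = genVal K A Ω x := FreeAlgebra.lift_ι_apply _ _

@[simp] lemma Psi_gen (x : Gen n) :
    Psi K A Ω (gen K x) = genVal K A Ω x := FreeAlgebra.lift_ι_apply _ _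

lemma psi_rel : ∀ ⦃x y : FA K n⦄, HRel K A Ω x y → Psi K A Ω x = Psi K A Ω y := by
  intro x y h
  cases h with
  | idem i j =>
      rw [map_mul, Psi_gen, Psi_gen]
      show inlE K A Ω (eV K A Ω i) * inlE K A Ω (eV K A Ω j) = _
      rw [← map_mul, hV]
      split_ifs with hij
      · rw [Psi_gen]; rfl
      · rw [map_zero, map_zero]
  | sum_one =>
      rw [map_sum, map_one]
      have h2 : ∀ i ∈ Finset.univ, Psi K A Ω (gen K (Gen.vtx i)) = inlE K A Ω (eV K A Ω i) :=
        fun i _ => Psi_gen K A Ω _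
      rw [Finset.sum_congr rfl h2, ← map_sum, hSum, map_one]
  | lp_comp i =>
      simp only [map_mul, Psi_gen]
      show inlE K A Ω (eV K A Ω i) * inlE K A Ω (eL K A Ω i) * inlE K A Ω (eV K A Ω i)
          = inlE K A Ω (eL K A Ω i)
      rw [← map_mul, ← map_mul, hLp]
  | arr_comp i j k =>
      simp only [map_mul, Psi_gen]
      show inlE K A Ω (eV K A Ω i) * genVal K A Ω (Gen.arr i j k) * inlE K A Ω (eV K A Ω j)
          = genVal K A Ω (Gen.arr i j k)
      refine Prod.ext ?_ ?_
      · show eV K A Ω i * eA K A Ω i j k * eV K A Ω j = eA K A Ω i j k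
        exact hArr K A Ω i j k
      · rw [mul_inl_snd, inl_mul_snd]
        by_cases hv : (i,j) ∈ Ω ∧ k < gij A i j
        · have h2 : (genVal K A Ω (Gen.arr i j k)).2
              = mk2 K A Ω 1 ⟨eA K A Ω i j k, eA_mem K A Ω hv.1 hv.2⟩ 1 := by
            simp only [genVal]
            rw [dif_pos hv]
          rw [h2, lact2_mk2, ract2_mk2, mul_one, one_mul]
          have m1 : mk2 K A Ω (eV K A Ω i) ⟨eA K A Ω i j k, eA_mem K A Ω hv.1 hv.2⟩ (eV K A Ω j)
              = mk2 K A Ω 1 ⟨eA K A Ω i j k, eA_mem K A Ω hv.1 hv.2⟩ (eV K A Ω j) := by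
            have h3 := mk2_move_left K A Ω 1 (eV K A Ω j) (eV K A Ω i) (eV_mem K A Ω i)
              ⟨eA K A Ω i j k, eA_mem K A Ω hv.1 hv.2⟩
              ⟨eA K A Ω i j k, eA_mem K A Ω hv.1 hv.2⟩
              ((eV_mul_eA K A Ω i j k).symm)
            rwa [one_mul] at h3
          have m2 : mk2 K A Ω 1 ⟨eA K A Ω i j k, eA_mem K A Ω hv.1 hv.2⟩ 1
              = mk2 K A Ω 1 ⟨eA K A Ω i j k, eA_mem K A Ω hv.1 hv.2⟩ (eV K A Ω j) := by
            have h3 := mk2_move_right K A Ω 1 1 (eV K A Ω j) (eV_mem K A Ω j)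
              ⟨eA K A Ω i j k, eA_mem K A Ω hv.1 hv.2⟩
              ⟨eA K A Ω i j k, eA_mem K A Ω hv.1 hv.2⟩
              ((eA_mul_eV K A Ω i j k).symm)
            rwa [mul_one] at h3
          rw [m1, ← m2]
        · have h2 : (genVal K A Ω (Gen.arr i j k)).2 = 0 := by
            simp only [genVal]
            rw [dif_neg hv]
          rw [h2, map_zero, map_zero]
  | arr_invalid i j k hnv =>
      rw [Psi_gen, map_zero]
      refine Prod.ext ?_ ?_
      · show eA K A Ω i j k = (0 : ExtA K A Ω).1
        rw [hInv K A Ω hnv]; rfl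
      · show (genVal K A Ω (Gen.arr i j k)).2 = (0 : ExtA K A Ω).2
        simp only [genVal]
        rw [dif_neg hnv]; rfl
  | lp_nil i =>
      rw [map_pow, Psi_gen, map_zero]
      show inlE K A Ω (eL K A Ω i) ^ (A.d i).toNat = 0
      rw [← map_pow, hNil, map_zero]
  | comm i j k h hk =>
      simp only [map_mul, map_pow, Psi_gen]
      show inlE K A Ω (eL K A Ω i) ^ expo A i j * genVal K A Ω (Gen.arr i j k)
          = genVal K A Ω (Gen.arr i j k) * inlE K A Ω (eL K A Ω j) ^ expo A j i
      rw [← map_pow, ← map_pow]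
      refine Prod.ext ?_ ?_
      · show eL K A Ω i ^ expo A i j * eA K A Ω i j k
            = eA K A Ω i j k * eL K A Ω j ^ expo A j i
        exact hComm K A Ω h hk
      · rw [inl_mul_snd, mul_inl_snd]
        have h2 : (genVal K A Ω (Gen.arr i j k)).2
            = mk2 K A Ω 1 ⟨eA K A Ω i j k, eA_mem K A Ω h hk⟩ 1 := by
          simp only [genVal]
          rw [dif_pos ⟨h, hk⟩]
        rw [h2, lact2_mk2, ract2_mk2, mul_one, one_mul]
        have m1 := mk2_move_left K A Ω 1 1 (eL K A Ω i ^ expo A i j)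
          (eL_pow_mem K A Ω i _)
          ⟨eA K A Ω i j k, eA_mem K A Ω h hk⟩
          ⟨eL K A Ω i ^ expo A i j * eA K A Ω i j k, eLa_eA_mem K A Ω _ h hk⟩ rfl
        rw [one_mul] at m1
        have m2 := mk2_move_right K A Ω 1 1 (eL K A Ω j ^ expo A j i)
          (eL_pow_mem K A Ω j _)
          ⟨eA K A Ω i j k, eA_mem K A Ω h hk⟩
          ⟨eA K A Ω i j k * eL K A Ω j ^ expo A j i, eA_eLb_mem K A Ω _ h hk⟩ rfl
        rw [mul_one] at m2
        rw [m1, ← m2]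
        exact congrArg (fun b => mk2 K A Ω 1 b 1) (Subtype.ext (hComm K A Ω h hk))

noncomputable def Phi : HAlg K A Ω →ₐ[K] ExtA K A Ω :=
  RingQuot.liftAlgHom K ⟨Psi K A Ω, psi_rel K A Ω⟩

@[simp] lemma phi_mk (x : FA K n) :
    Phi K A Ω (RingQuot.mkAlgHom K (HRel K A Ω) x) = Psi K A Ω x :=
  RingQuot.liftAlgHom_mkAlgHom_apply K (Psi K A Ω) (psi_rel K A Ω) x

lemma fst_phi (x : HAlg K A Ω) : (Phi K A Ω x).1 = x := by
  obtain ⟨y, rfl⟩ := RingQuot.mkAlgHom_surjective K (HRel K A Ω) x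
  rw [phi_mk]
  induction y using FreeAlgebra.induction with
  | grade0 r => rw [AlgHom.commutes, AlgHom.commutes, extA_algebraMap_fst]
  | grade1 g => cases g <;> (rw [Psi_iota]; rfl)
  | mul a b iha ihb =>
      rw [map_mul, map_mul]
      show (Psi K A Ω a).1 * (Psi K A Ω b).1 = _
      rw [iha, ihb]
  | add a b iha ihb =>
      rw [map_add, map_add]
      show (Psi K A Ω a).1 + (Psi K A Ω b).1 = _
      rw [iha, ihb]

lemma phi_S {s : HAlg K A Ω} (hs : s ∈ Ssub K A Ω) : Phi K A Ω s = inlE K A Ω s := by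
  have hle : Ssub K A Ω ≤ AlgHom.equalizer (Phi K A Ω) (inlE K A Ω) := by
    apply Algebra.adjoin_le
    rintro x (⟨i, rfl⟩ | ⟨i, rfl⟩)
    · show Phi K A Ω (eV K A Ω i) = inlE K A Ω (eV K A Ω i)
      calc Phi K A Ω (eV K A Ω i) = Psi K A Ω (gen K (Gen.vtx i)) :=
            phi_mk K A Ω (gen K (Gen.vtx i))
        _ = genVal K A Ω (Gen.vtx i) := Psi_gen K A Ω _
        _ = inlE K A Ω (eV K A Ω i) := rfl
    · show Phi K A Ω (eL K A Ω i) = inlE K A Ω (eL K A Ω i)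
      calc Phi K A Ω (eL K A Ω i) = Psi K A Ω (gen K (Gen.lp i)) :=
            phi_mk K A Ω (gen K (Gen.lp i))
        _ = genVal K A Ω (Gen.lp i) := Psi_gen K A Ω _
        _ = inlE K A Ω (eL K A Ω i) := rfl
  exact hle hs


/-! #### the derivation `DL` and the retraction `FF` -/

noncomputable def DL : HAlg K A Ω →ₗ[K] THBH K A Ω where
  toFun x := (Phi K A Ω x).2
  map_add' x y := by
    show (Phi K A Ω (x + y)).2 = (Phi K A Ω x).2 + (Phi K A Ω y).2
    rw [map_add]; rfl
  map_smul' c x := by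
    show (Phi K A Ω (c • x)).2 = c • (Phi K A Ω x).2
    rw [map_smul]; rfl

lemma DL_mul (x y : HAlg K A Ω) :
    DL K A Ω (x * y) = lact2 K A Ω x (DL K A Ω y) + ract2 K A Ω y (DL K A Ω x) := by
  show (Phi K A Ω (x * y)).2 = _
  rw [map_mul]
  show lact2 K A Ω (Phi K A Ω x).1 (Phi K A Ω y).2
      + ract2 K A Ω (Phi K A Ω y).1 (Phi K A Ω x).2 = _
  rw [fst_phi, fst_phi]
  rfl

lemma DL_S {s : HAlg K A Ω} (hs : s ∈ Ssub K A Ω) : DL K A Ω s = 0 := by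
  show (Phi K A Ω s).2 = 0
  rw [phi_S K A Ω hs]
  rfl

lemma DL_B (x : HAlg K A Ω) (hx : x ∈ Bsub K A Ω) :
    DL K A Ω x = mk2 K A Ω 1 ⟨x, hx⟩ 1 := by
  induction hx using Submodule.span_induction with
  | mem z hz =>
      obtain ⟨i, j, k, a, c, h1, h2, rfl⟩ := hz
      have hA : Phi K A Ω (eA K A Ω i j k)
          = (eA K A Ω i j k, mk2 K A Ω 1 ⟨eA K A Ω i j k, eA_mem K A Ω h1 h2⟩ 1) := by
        calc Phi K A Ω (eA K A Ω i j k) = Psi K A Ω (gen K (Gen.arr i j k)) :=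
              phi_mk K A Ω (gen K (Gen.arr i j k))
          _ = genVal K A Ω (Gen.arr i j k) := Psi_gen K A Ω _
          _ = _ := by
              simp only [genVal]
              rw [dif_pos ⟨h1, h2⟩]
      show (Phi K A Ω (eL K A Ω i ^ a * eA K A Ω i j k * eL K A Ω j ^ c)).2 = _
      rw [map_mul, map_mul, map_pow, map_pow, phi_S K A Ω (eL_mem K A Ω i),
        phi_S K A Ω (eL_mem K A Ω j), ← map_pow, ← map_pow, hA, mul_inl_snd, inl_mul_snd]
      show ract2 K A Ω (eL K A Ω j ^ c) (lact2 K A Ω (eL K A Ω i ^ a)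
          (mk2 K A Ω 1 ⟨eA K A Ω i j k, eA_mem K A Ω h1 h2⟩ 1)) = _
      rw [lact2_mk2, ract2_mk2, mul_one, one_mul]
      have m1 := mk2_move_left K A Ω 1 (eL K A Ω j ^ c) (eL K A Ω i ^ a)
        (eL_pow_mem K A Ω i a)
        ⟨eA K A Ω i j k, eA_mem K A Ω h1 h2⟩
        ⟨eL K A Ω i ^ a * eA K A Ω i j k, eLa_eA_mem K A Ω a h1 h2⟩ rfl
      rw [one_mul] at m1
      have m2 := mk2_move_right K A Ω 1 1 (eL K A Ω j ^ c) (eL_pow_mem K A Ω j c)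
        ⟨eL K A Ω i ^ a * eA K A Ω i j k, eLa_eA_mem K A Ω a h1 h2⟩
        ⟨eL K A Ω i ^ a * eA K A Ω i j k * eL K A Ω j ^ c, gen_mem K A Ω a c h1 h2⟩ rfl
      rw [mul_one] at m2
      rw [m1, ← m2]
  | zero =>
      rw [map_zero]
      exact (mk2_zero_mid K A Ω 1 1).symm
  | add u v hu hv ihu ihv =>
      rw [map_add, ihu, ihv]
      exact (mk2_add_mid K A Ω 1 ⟨u, hu⟩ ⟨v, hv⟩ 1).symm
  | smul c u hu ihu =>
      rw [map_smul, ihu]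
      exact (mk2_smul_mid K A Ω c 1 ⟨u, hu⟩ 1).symm

noncomputable def FF0 : (HAlg K A Ω ⊗[K] HAlg K A Ω) →ₗ[K] THBH K A Ω :=
  TensorProduct.lift (LinearMap.mk₂ K (fun x y => ract2 K A Ω y (DL K A Ω x))
    (fun x₁ x₂ y => by
      show ract2 K A Ω y (DL K A Ω (x₁ + x₂))
          = ract2 K A Ω y (DL K A Ω x₁) + ract2 K A Ω y (DL K A Ω x₂)
      rw [map_add, map_add])
    (fun c x y => by
      show ract2 K A Ω y (DL K A Ω (c • x)) = c • ract2 K A Ω y (DL K A Ω x)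
      rw [map_smul, map_smul])
    (fun x y₁ y₂ => ract2_add_apply K A Ω y₁ y₂ (DL K A Ω x))
    (fun c x y => ract2_smul_apply K A Ω c y (DL K A Ω x)))

@[simp] lemma FF0_tmul (x y : HAlg K A Ω) :
    FF0 K A Ω (x ⊗ₜ[K] y) = ract2 K A Ω y (DL K A Ω x) := rfl

noncomputable def FF : THH K A Ω →ₗ[K] THBH K A Ω :=
  (Submodule.liftQ (R := K) (M := HAlg K A Ω ⊗[K] HAlg K A Ω) (R₂ := K)
    (τ₁₂ := RingHom.id K) (bal1 K A Ω) (FF0 K A Ω)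
    (by
      refine Submodule.span_le.mpr ?_
      rintro x ⟨h, h', s, hs, rfl⟩
      simp only [SetLike.mem_coe, LinearMap.mem_ker, map_sub, FF0_tmul]
      rw [DL_mul, DL_S K A Ω hs, map_zero, zero_add, ract2_mul_apply]
      exact sub_self _) :)

@[simp] lemma FF_mk1 (x y : HAlg K A Ω) :
    FF K A Ω (mk1 K A Ω x y) = ract2 K A Ω y (DL K A Ω x) := rfl

lemma FF_delta (z : THBH K A Ω) : FF K A Ω (delta K A Ω z) = z := by
  have h : (FF K A Ω).comp (delta K A Ω) = LinearMap.id := by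
    refine thbh_ext K A Ω ?_
    intro h b h'
    rw [LinearMap.comp_apply, LinearMap.id_apply, delta_mk2, map_sub, FF_mk1, FF_mk1]
    have hb : DL K A Ω (b : HAlg K A Ω) = mk2 K A Ω 1 b 1 := by
      have h2 := DL_B K A Ω (b : HAlg K A Ω) b.2
      rwa [Subtype.coe_eta] at h2
    rw [DL_mul, hb, lact2_mk2, mul_one, ract2_mul_apply, map_add, ract2_mk2, one_mul]
    abel
  exact DFunLike.congr_fun h z

lemma delta_inj : Function.Injective (delta K A Ω) :=
  Function.LeftInverse.injective (g := FF K A Ω) (FF_delta K A Ω)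

/-! #### exactness in the middle -/

lemma mu_delta : (mul1 K A Ω).comp (delta K A Ω) = 0 :=
  thbh_ext K A Ω (fun h b h' => by
    rw [LinearMap.comp_apply, delta_mk2, map_sub, mul1_mk1, mul1_mk1, mul_assoc, sub_self,
      LinearMap.zero_apply])

lemma key (g : HAlg K A Ω) : ∀ h h' : HAlg K A Ω,
    mk1 K A Ω h (g * h') - mk1 K A Ω (h * g) h' ∈ LinearMap.range (delta K A Ω) := by
  obtain ⟨x, rfl⟩ := RingQuot.mkAlgHom_surjective K (HRel K A Ω) g
  induction x using FreeAlgebra.induction with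
  | grade0 r =>
      intro h h'
      rw [AlgHom.commutes]
      have e1 : algebraMap K (HAlg K A Ω) r * h' = r • h' := (Algebra.smul_def r h').symm
      have e2 : h * algebraMap K (HAlg K A Ω) r = r • h := by
        rw [Algebra.smul_def]
        exact (Algebra.commutes r h).symm
      rw [e1, e2, mk1_smul_left, mk1_smul_right, sub_self]
      exact Submodule.zero_mem _
  | grade1 g =>
      intro h h'
      cases g with
      | vtx i =>
          have e : RingQuot.mkAlgHom K (HRel K A Ω) (FreeAlgebra.ι K (Gen.vtx i))
              = eV K A Ω i := rfl
          rw [e, ← mk1_move K A Ω h h' (eV K A Ω i) (eV_mem K A Ω i), sub_self]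
          exact Submodule.zero_mem _
      | lp i =>
          have e : RingQuot.mkAlgHom K (HRel K A Ω) (FreeAlgebra.ι K (Gen.lp i))
              = eL K A Ω i := rfl
          rw [e, ← mk1_move K A Ω h h' (eL K A Ω i) (eL_mem K A Ω i), sub_self]
          exact Submodule.zero_mem _
      | arr i j k =>
          by_cases hv : (i,j) ∈ Ω ∧ k < gij A i j
          · refine ⟨-(mk2 K A Ω h ⟨eA K A Ω i j k, eA_mem K A Ω hv.1 hv.2⟩ h'), ?_⟩
            rw [map_neg, delta_mk2, neg_sub]
            rfl
          · have e : RingQuot.mkAlgHom K (HRel K A Ω) (FreeAlgebra.ι K (Gen.arr i j k))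
                = 0 := hInv K A Ω hv
            rw [e, zero_mul, mul_zero, mk1_zero_right, mk1_zero_left, sub_self]
            exact Submodule.zero_mem _
  | mul a b iha ihb =>
      intro h h'
      rw [map_mul]
      have e3 := add_mem (iha h (RingQuot.mkAlgHom K (HRel K A Ω) b * h'))
        (ihb (h * RingQuot.mkAlgHom K (HRel K A Ω) a) h')
      rw [sub_add_sub_cancel] at e3
      simpa [mul_assoc] using e3
  | add a b iha ihb =>
      intro h h'
      rw [map_add]
      have e3 := add_mem (iha h h') (ihb h h')
      have e4 : mk1 K A Ω h (RingQuot.mkAlgHom K (HRel K A Ω) a * h')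
            + mk1 K A Ω h (RingQuot.mkAlgHom K (HRel K A Ω) b * h')
            - (mk1 K A Ω (h * RingQuot.mkAlgHom K (HRel K A Ω) a) h'
              + mk1 K A Ω (h * RingQuot.mkAlgHom K (HRel K A Ω) b) h')
          = (mk1 K A Ω h (RingQuot.mkAlgHom K (HRel K A Ω) a * h')
              - mk1 K A Ω (h * RingQuot.mkAlgHom K (HRel K A Ω) a) h')
            + (mk1 K A Ω h (RingQuot.mkAlgHom K (HRel K A Ω) b * h')
              - mk1 K A Ω (h * RingQuot.mkAlgHom K (HRel K A Ω) b) h') := by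
        abel
      rw [add_mul, mul_add, mk1_add_right, mk1_add_left, e4]
      exact e3

noncomputable def mkT (t : HAlg K A Ω ⊗[K] HAlg K A Ω) : THH K A Ω :=
  Submodule.Quotient.mk t

lemma mkT_surj : Function.Surjective (mkT K A Ω) :=
  fun x => (@Submodule.Quotient.mk_surjective K (HAlg K A Ω ⊗[K] HAlg K A Ω) _ _ _ (bal1 K A Ω) :) x

lemma mkT_zero : mkT K A Ω 0 = 0 := Submodule.Quotient.mk_zero _

lemma mkT_add (a b : HAlg K A Ω ⊗[K] HAlg K A Ω) :
    mkT K A Ω (a + b) = mkT K A Ω a + mkT K A Ω b := Submodule.Quotient.mk_add _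

lemma mkT_tmul (a b : HAlg K A Ω) : mkT K A Ω (a ⊗ₜ[K] b) = mk1 K A Ω a b := rfl

lemma main_sub (t : HAlg K A Ω ⊗[K] HAlg K A Ω) :
    mkT K A Ω t - mk1 K A Ω (mul1 K A Ω (mkT K A Ω t)) 1
      ∈ LinearMap.range (delta K A Ω) := by
  induction t with
  | zero =>
      rw [mkT_zero, map_zero, mk1_zero_left, sub_self]
      exact Submodule.zero_mem _
  | tmul a b =>
      rw [mkT_tmul, mul1_mk1]
      have h2 := key K A Ω b a 1
      rwa [mul_one] at h2
  | add a b iha ihb =>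
      rw [mkT_add, map_add, mk1_add_left]
      have e4 : mkT K A Ω a + mkT K A Ω b
            - (mk1 K A Ω (mul1 K A Ω (mkT K A Ω a)) 1
              + mk1 K A Ω (mul1 K A Ω (mkT K A Ω b)) 1)
          = (mkT K A Ω a - mk1 K A Ω (mul1 K A Ω (mkT K A Ω a)) 1)
            + (mkT K A Ω b - mk1 K A Ω (mul1 K A Ω (mkT K A Ω b)) 1) := by
        abel
      rw [e4]
      exact add_mem iha ihb

lemma ker_le_range : LinearMap.ker (mul1 K A Ω) ≤ LinearMap.range (delta K A Ω) := by
  intro x hx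
  obtain ⟨t, rfl⟩ := mkT_surj K A Ω x
  have h2 := main_sub K A Ω t
  rw [LinearMap.mem_ker] at hx
  rw [hx, mk1_zero_left, sub_zero] at h2
  exact h2


end Aux


/-- there is a short exact sequence of `H`-`H`-bimodules
`0 → H ⊗_S B ⊗_S H → H ⊗_S H → H → 0`, where the first map is
`δ(h ⊗ b ⊗ h') = hb ⊗ h' − h ⊗ bh'` and the second is multiplication. -/
theorem statement_2 (hΩ : IsOrientation A Ω) :
    ∃ (δ : THBH K A Ω →ₗ[K] THH K A Ω) (μ : THH K A Ω →ₗ[K] HAlg K A Ω)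
      (lact₂ ract₂ : HAlg K A Ω → (THBH K A Ω →ₗ[K] THBH K A Ω))
      (lact₁ ract₁ : HAlg K A Ω → (THH K A Ω →ₗ[K] THH K A Ω)),
      -- the formulas for δ and the multiplication map μ
      (∀ (h h' : HAlg K A Ω) (b : ↥(Bsub K A Ω)),
        δ (mk2 K A Ω h b h') = mk1 K A Ω (h * (b : HAlg K A Ω)) h' -
          mk1 K A Ω h ((b : HAlg K A Ω) * h')) ∧
      (∀ h h' : HAlg K A Ω, μ (mk1 K A Ω h h') = h * h') ∧
      -- the `H`-`H`-bimodule structures, given on pure tensors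
      (∀ (a h h' : HAlg K A Ω) (b : ↥(Bsub K A Ω)),
        lact₂ a (mk2 K A Ω h b h') = mk2 K A Ω (a * h) b h' ∧
        ract₂ a (mk2 K A Ω h b h') = mk2 K A Ω h b (h' * a)) ∧
      (∀ a h h' : HAlg K A Ω,
        lact₁ a (mk1 K A Ω h h') = mk1 K A Ω (a * h) h' ∧
        ract₁ a (mk1 K A Ω h h') = mk1 K A Ω h (h' * a)) ∧
      -- δ and μ are morphisms of `H`-`H`-bimodules
      (∀ (a : HAlg K A Ω) (x : THBH K A Ω),
        δ (lact₂ a x) = lact₁ a (δ x) ∧ δ (ract₂ a x) = ract₁ a (δ x)) ∧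
      (∀ (a : HAlg K A Ω) (y : THH K A Ω),
        μ (lact₁ a y) = a * μ y ∧ μ (ract₁ a y) = μ y * a) ∧
      -- exactness: `0 → H⊗_S B⊗_S H → H⊗_S H → H → 0`
      Function.Injective δ ∧ Function.Surjective μ ∧
      LinearMap.range δ = LinearMap.ker μ := by
  refine ⟨delta K A Ω, mul1 K A Ω, fun a => lact2 K A Ω a, fun a => ract2 K A Ω a,
    fun a => lact1 K A Ω a, fun a => ract1 K A Ω a,
    fun h h' b => delta_mk2 K A Ω h b h',
    fun h h' => mul1_mk1 K A Ω h h',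
    fun a h h' b => ⟨lact2_mk2 K A Ω a h b h', ract2_mk2 K A Ω a h b h'⟩,
    fun a h h' => ⟨lact1_mk1 K A Ω a h h', ract1_mk1 K A Ω a h h'⟩,
    ?_, ?_, delta_inj K A Ω, ?_, ?_⟩
  · intro a x
    constructor
    · have h : (delta K A Ω).comp (lact2 K A Ω a)
          = (lact1 K A Ω a).comp (delta K A Ω) :=
        thbh_ext K A Ω (fun u b v => by
          rw [LinearMap.comp_apply, LinearMap.comp_apply, lact2_mk2, delta_mk2, delta_mk2,
            map_sub, lact1_mk1, lact1_mk1, mul_assoc])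
      exact DFunLike.congr_fun h x
    · have h : (delta K A Ω).comp (ract2 K A Ω a)
          = (ract1 K A Ω a).comp (delta K A Ω) :=
        thbh_ext K A Ω (fun u b v => by
          rw [LinearMap.comp_apply, LinearMap.comp_apply, ract2_mk2, delta_mk2, delta_mk2,
            map_sub, ract1_mk1, ract1_mk1, mul_assoc])
      exact DFunLike.congr_fun h x
  · intro a y
    constructor
    · have h : (mul1 K A Ω).comp (lact1 K A Ω a)
          = (LinearMap.mulLeft K a).comp (mul1 K A Ω) :=
        thh_ext K A Ω (fun u v => by
          rw [LinearMap.comp_apply, LinearMap.comp_apply, lact1_mk1, mul1_mk1, mul1_mk1,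
            LinearMap.mulLeft_apply, mul_assoc])
      exact DFunLike.congr_fun h y
    · have h : (mul1 K A Ω).comp (ract1 K A Ω a)
          = (LinearMap.mulRight K a).comp (mul1 K A Ω) :=
        thh_ext K A Ω (fun u v => by
          rw [LinearMap.comp_apply, LinearMap.comp_apply, ract1_mk1, mul1_mk1, mul1_mk1,
            LinearMap.mulRight_apply, mul_assoc])
      exact DFunLike.congr_fun h y
  · intro h
    exact ⟨mk1 K A Ω h 1, by rw [mul1_mk1, mul_one]⟩
  · apply le_antisymm
    · rintro y ⟨z, rfl⟩
      rw [LinearMap.mem_ker]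
      have h2 := DFunLike.congr_fun (mu_delta K A Ω) z
      simpa using h2
    · exact ker_le_range K A Ω

end

end GLS
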